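/- (Jensen–Steffensen refinement for superquadratic functions with superadditive derivative) Let f be continuously differentiable on [0,b), f(0) ≤ 0, and f' superadditive (f'(x+y) ≥ f'(x) + f'(y)). Let a₁,...,aₙ satisfy the Jensen–Steffensen conditions and 0 ≤ x₁ ≤ ... ≤ xₙ < b, x̄ = (1/Aₙ)∑aᵢxᵢ. Then (1/Aₙ)∑ aᵢ f(xᵢ) ≥ f(x̄) + (1/Aₙ)∑ aᵢ f(|xᵢ - x̄|). -/

import Mathlib

lemma abel_id (w φ : ℕ → ℝ) (m : ℕ) :
    ∑ i ∈ Finset.range (m+1), w i * φ i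
      = ∑ j ∈ Finset.range m, (∑ i ∈ Finset.range (j+1), w i) * (φ j - φ (j+1))
        + (∑ i ∈ Finset.range (m+1), w i) * φ m := by
  induction m with
  | zero => simp
  | succ m ih =>
    rw [Finset.sum_range_succ (fun i => w i * φ i), ih,
        Finset.sum_range_succ (fun j => (∑ i ∈ Finset.range (j+1), w i) * (φ j - φ (j+1))) m,
        Finset.sum_range_succ w (m+1)]
    ring

lemma abelA (n : ℕ) (hn : 0 < n) (w φ : ℕ → ℝ)
    (hP : ∀ j ≤ n, 0 ≤ ∑ i ∈ Finset.range j, w i)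
    (hφ : ∀ i j, i ≤ j → j < n → φ j ≤ φ i)
    (hlast : 0 ≤ φ (n-1)) :
    0 ≤ ∑ i ∈ Finset.range n, w i * φ i := by
  obtain ⟨m, rfl⟩ : ∃ m, n = m + 1 := ⟨n-1, by omega⟩
  rw [abel_id]
  have h1 : 0 ≤ ∑ j ∈ Finset.range m, (∑ i ∈ Finset.range (j+1), w i) * (φ j - φ (j+1)) := by
    apply Finset.sum_nonneg
    intro j hj
    have hj' := Finset.mem_range.mp hj
    exact mul_nonneg (hP (j+1) (by omega))
      (by have := hφ j (j+1) (by omega) (by omega); linarith)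
  have h2 : 0 ≤ (∑ i ∈ Finset.range (m+1), w i) * φ m :=
    mul_nonneg (hP (m+1) le_rfl) (by simpa using hlast)
  linarith

lemma abelB (n : ℕ) (hn : 0 < n) (w ψ : ℕ → ℝ)
    (hP : ∀ j ≤ n, ∑ i ∈ Finset.range j, w i ≤ ∑ i ∈ Finset.range n, w i)
    (hψ : ∀ i j, i ≤ j → j < n → ψ i ≤ ψ j)
    (hfirst : 0 ≤ ψ 0) :
    0 ≤ ∑ i ∈ Finset.range n, w i * ψ i := by
  have key : ∀ j ≤ n, ∑ i ∈ Finset.range j, w (n-1-i)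
      = (∑ i ∈ Finset.range n, w i) - ∑ i ∈ Finset.range (n-j), w i := by
    intro j hj
    have h1 : ∑ i ∈ Finset.range j, w (n-1-i) = ∑ i ∈ Finset.range j, w ((n-j) + i) := by
      rw [← Finset.sum_range_reflect (fun i => w ((n-j)+i)) j]
      apply Finset.sum_congr rfl
      intro i hi
      have hi' := Finset.mem_range.mp hi
      congr 1
      omega
    have h2 : ∑ i ∈ Finset.range j, w ((n-j) + i) = ∑ i ∈ Finset.Ico (n-j) n, w i := by
      rw [Finset.sum_Ico_eq_sum_range]
      have : n - (n - j) = j := by omega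
      rw [this]
    have h3 : ∑ i ∈ Finset.Ico (n-j) n, w i
        = (∑ i ∈ Finset.range n, w i) - ∑ i ∈ Finset.range (n-j), w i := by
      rw [Finset.sum_Ico_eq_sub _ (by omega)]
    rw [h1, h2, h3]
  have main := abelA n hn (fun i => w (n-1-i)) (fun i => ψ (n-1-i))
    (fun j hj => by rw [key j hj]; have := hP (n-j) (by omega); linarith)
    (fun i j hij hj => hψ (n-1-j) (n-1-i) (by omega) (by omega))
    (by simpa using hfirst)
  have hre := Finset.sum_range_reflect (fun i => w i * ψ i) n
  rw [← hre]
  exact main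

lemma key1 (b : ℝ) (f f' : ℝ → ℝ)
    (hf : ∀ x ∈ Set.Ico (0 : ℝ) b, HasDerivAt f (f' x) x)
    (hf'c : ContinuousOn f' (Set.Ico (0 : ℝ) b))
    (hsup : ∀ u v, 0 ≤ u → 0 ≤ v → u + v < b → f' u + f' v ≤ f' (u + v))
    (z u v : ℝ) (h0u : 0 ≤ u) (huv : u ≤ v) (hvz : v ≤ z) (hzb : z < b) :
    f v - f (z - v) - f' z * v ≤ f u - f (z - u) - f' z * u := by
  have hsub1 : Set.Icc u v ⊆ Set.Ico 0 b := fun t ht =>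
    ⟨le_trans h0u ht.1, lt_of_le_of_lt (ht.2.trans hvz) hzb⟩
  have hsub2 : Set.Icc (z - v) (z - u) ⊆ Set.Ico 0 b := fun t ht =>
    ⟨le_trans (by linarith) ht.1, lt_of_le_of_lt ht.2 (by linarith)⟩
  have hint1 : IntervalIntegrable f' MeasureTheory.volume u v :=
    (hf'c.mono hsub1).intervalIntegrable_of_Icc huv
  have hint2 : IntervalIntegrable f' MeasureTheory.volume (z-v) (z-u) :=
    (hf'c.mono hsub2).intervalIntegrable_of_Icc (by linarith)
  have ftc1 : ∫ t in u..v, f' t = f v - f u := by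
    apply intervalIntegral.integral_eq_sub_of_hasDerivAt
    · intro t ht
      rw [Set.uIcc_of_le huv] at ht
      exact hf t (hsub1 ht)
    · exact hint1
  have ftc2 : ∫ t in (z-v)..(z-u), f' t = f (z-u) - f (z-v) := by
    apply intervalIntegral.integral_eq_sub_of_hasDerivAt
    · intro t ht
      rw [Set.uIcc_of_le (by linarith : z - v ≤ z - u)] at ht
      exact hf t (hsub2 ht)
    · exact hint2
  have hcomp : ∫ t in u..v, f' (z - t) = f (z-u) - f (z-v) := by
    rw [intervalIntegral.integral_comp_sub_left f' z, ftc2]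
  have hcont : ContinuousOn (fun t => f' (z - t)) (Set.Icc u v) := by
    apply (hf'c.mono hsub2).comp (continuousOn_const.sub continuousOn_id)
    intro t ht
    exact ⟨by simp; linarith [ht.2], by simp; linarith [ht.1]⟩
  have hintc : IntervalIntegrable (fun t => f' (z - t)) MeasureTheory.volume u v :=
    hcont.intervalIntegrable_of_Icc huv
  have hmono : ∫ t in u..v, (f' t + f' (z - t)) ≤ ∫ t in u..v, f' z := by
    apply intervalIntegral.integral_mono_on huv (hint1.add hintc) intervalIntegrable_const
    intro t ht
    have := hsup t (z - t) (le_trans h0u ht.1) (by linarith [ht.2]) (by linarith)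
    simpa using this
  rw [intervalIntegral.integral_add hint1 hintc, ftc1, hcomp,
      intervalIntegral.integral_const, smul_eq_mul] at hmono
  nlinarith [hmono]

lemma key2 (b : ℝ) (f f' : ℝ → ℝ)
    (hf : ∀ x ∈ Set.Ico (0 : ℝ) b, HasDerivAt f (f' x) x)
    (hf'c : ContinuousOn f' (Set.Ico (0 : ℝ) b))
    (hsup : ∀ u v, 0 ≤ u → 0 ≤ v → u + v < b → f' u + f' v ≤ f' (u + v))
    (z u v : ℝ) (h0z : 0 ≤ z) (hzu : z ≤ u) (huv : u ≤ v) (hvb : v < b) :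
    f u - f (u - z) - f' z * u ≤ f v - f (v - z) - f' z * v := by
  have hsub1 : Set.Icc u v ⊆ Set.Ico 0 b := fun t ht =>
    ⟨le_trans (le_trans h0z hzu) ht.1, lt_of_le_of_lt ht.2 hvb⟩
  have hsub2 : Set.Icc (u - z) (v - z) ⊆ Set.Ico 0 b := fun t ht =>
    ⟨le_trans (by linarith) ht.1, lt_of_le_of_lt ht.2 (by linarith)⟩
  have hint1 : IntervalIntegrable f' MeasureTheory.volume u v :=
    (hf'c.mono hsub1).intervalIntegrable_of_Icc huv
  have hint2 : IntervalIntegrable f' MeasureTheory.volume (u-z) (v-z) :=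
    (hf'c.mono hsub2).intervalIntegrable_of_Icc (by linarith)
  have ftc1 : ∫ t in u..v, f' t = f v - f u := by
    apply intervalIntegral.integral_eq_sub_of_hasDerivAt
    · intro t ht
      rw [Set.uIcc_of_le huv] at ht
      exact hf t (hsub1 ht)
    · exact hint1
  have ftc2 : ∫ t in (u-z)..(v-z), f' t = f (v-z) - f (u-z) := by
    apply intervalIntegral.integral_eq_sub_of_hasDerivAt
    · intro t ht
      rw [Set.uIcc_of_le (by linarith : u - z ≤ v - z)] at ht
      exact hf t (hsub2 ht)
    · exact hint2
  have hcomp : ∫ t in u..v, f' (t - z) = f (v-z) - f (u-z) := by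
    rw [intervalIntegral.integral_comp_sub_right f' z, ftc2]
  have hcont : ContinuousOn (fun t => f' (t - z)) (Set.Icc u v) := by
    apply (hf'c.mono hsub2).comp (continuousOn_id.sub continuousOn_const)
    intro t ht
    exact ⟨by simp; linarith [ht.1], by simp; linarith [ht.2]⟩
  have hintc : IntervalIntegrable (fun t => f' (t - z)) MeasureTheory.volume u v :=
    hcont.intervalIntegrable_of_Icc huv
  have hmono2 : ∫ t in u..v, (f' (t - z) + f' z) ≤ ∫ t in u..v, f' t := by
    apply intervalIntegral.integral_mono_on huv (hintc.add intervalIntegrable_const) hint1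
    intro t ht
    have := hsup (t - z) z (by linarith [ht.1]) h0z (by linarith [ht.2])
    simp only [sub_add_cancel] at this
    linarith
  rw [intervalIntegral.integral_add hintc intervalIntegrable_const, ftc1, hcomp,
      intervalIntegral.integral_const, smul_eq_mul] at hmono2
  nlinarith [hmono2]

/-- refined Jensen–Steffensen inequality for superquadratic functions with superadditive derivative. -/
theorem stmt15 (b : ℝ) (hb : 0 < b) (f f' : ℝ → ℝ)
    (hf : ∀ x ∈ Set.Ico (0 : ℝ) b, HasDerivAt f (f' x) x)
    (hf'c : ContinuousOn f' (Set.Ico (0 : ℝ) b))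
    (hsup : ∀ u v, 0 ≤ u → 0 ≤ v → u + v < b → f' u + f' v ≤ f' (u + v))
    (n : ℕ) (hn : 0 < n) (w x : ℕ → ℝ) (A xbar : ℝ)
    (hA : A = ∑ i ∈ Finset.range n, w i) (hApos : 0 < A)
    (hJS : ∀ j ≤ n, 0 ≤ ∑ i ∈ Finset.range j, w i ∧ ∑ i ∈ Finset.range j, w i ≤ A)
    (hx : ∀ i < n, x i ∈ Set.Ico (0 : ℝ) b)
    (hmono : ∀ i j, i ≤ j → j < n → x i ≤ x j)
    (hxbar : xbar = (1 / A) * ∑ i ∈ Finset.range n, w i * x i)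
    (hf0 : f 0 ≤ 0) :
    f xbar + (1 / A) * ∑ i ∈ Finset.range n, w i * f |x i - xbar| ≤
      (1 / A) * ∑ i ∈ Finset.range n, w i * f (x i) := by
  have hx0 : (0:ℝ) ≤ x 0 := (hx 0 hn).1
  have hn1 : n - 1 < n := by omega
  have hxn : x (n-1) < b := (hx (n-1) hn1).2
  have hsum_eq : ∑ i ∈ Finset.range n, w i * x i = A * xbar := by
    rw [hxbar]; field_simp
  -- x 0 ≤ xbar
  have hx0bar : x 0 ≤ xbar := by
    have hB := abelB n hn w (fun i => x i - x 0)
      (fun j hj => by rw [← hA]; exact (hJS j hj).2)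
      (fun i j hij hj => by linarith [hmono i j hij hj])
      (by simp)
    have e : ∑ i ∈ Finset.range n, w i * (x i - x 0) = A * xbar - A * x 0 := by
      simp only [mul_sub]
      rw [Finset.sum_sub_distrib, hsum_eq, ← Finset.sum_mul, ← hA]
    rw [e] at hB
    nlinarith
  -- xbar ≤ x (n-1)
  have hxbarn : xbar ≤ x (n-1) := by
    have hB := abelA n hn w (fun i => x (n-1) - x i)
      (fun j hj => (hJS j hj).1)
      (fun i j hij hj => by linarith [hmono i j hij hj])
      (by simp)
    have e : ∑ i ∈ Finset.range n, w i * (x (n-1) - x i) = A * x (n-1) - A * xbar := by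
      simp only [mul_sub]
      rw [Finset.sum_sub_distrib, hsum_eq, ← Finset.sum_mul, ← hA]
    rw [e] at hB
    nlinarith
  have hxbar0 : (0:ℝ) ≤ xbar := le_trans hx0 hx0bar
  have hxbarb : xbar < b := lt_of_le_of_lt hxbarn hxn
  -- the auxiliary function H
  set H : ℝ → ℝ := fun t => f t - f |t - xbar| - f' xbar * t with hH
  have Hxbar : H xbar = f xbar - f 0 - f' xbar * xbar := by simp [hH]
  have hdec : ∀ u v : ℝ, 0 ≤ u → u ≤ v → v ≤ xbar → H v ≤ H u := by
    intro u v h0 huv hvz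
    have hk := key1 b f f' hf hf'c hsup xbar u v h0 huv hvz hxbarb
    have e1 : |v - xbar| = xbar - v := by rw [abs_of_nonpos (by linarith : v - xbar ≤ 0)]; ring
    have e2 : |u - xbar| = xbar - u := by rw [abs_of_nonpos (by linarith : u - xbar ≤ 0)]; ring
    simp only [hH, e1, e2]
    linarith
  have hinc : ∀ u v : ℝ, xbar ≤ u → u ≤ v → v < b → H u ≤ H v := by
    intro u v hz huv hvb
    have hk := key2 b f f' hf hf'c hsup xbar u v hxbar0 hz huv hvb
    have e1 : |u - xbar| = u - xbar := abs_of_nonneg (by linarith)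
    have e2 : |v - xbar| = v - xbar := abs_of_nonneg (by linarith)
    simp only [hH, e1, e2]
    linarith
  -- sum over the clipped-below part
  have SA : 0 ≤ ∑ i ∈ Finset.range n, w i * (H (min (x i) xbar) - H xbar) := by
    apply abelA n hn w _ (fun j hj => (hJS j hj).1)
    · intro i j hij hj
      have h1 : H (min (x j) xbar) ≤ H (min (x i) xbar) := by
        apply hdec _ _ (le_min (hx i (lt_of_le_of_lt hij hj)).1 hxbar0)
          (min_le_min (hmono i j hij hj) le_rfl) (min_le_right _ _)
      linarith
    · have h1 : H xbar ≤ H (min (x (n-1)) xbar) := by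
        apply hdec _ _ (le_min (hx (n-1) hn1).1 hxbar0) (min_le_right _ _) le_rfl
      linarith
  -- sum over the clipped-above part
  have SB : 0 ≤ ∑ i ∈ Finset.range n, w i * (H (max (x i) xbar) - H xbar) := by
    apply abelB n hn w _ (fun j hj => by rw [← hA]; exact (hJS j hj).2)
    · intro i j hij hj
      have h1 : H (max (x i) xbar) ≤ H (max (x j) xbar) := by
        apply hinc _ _ (le_max_right _ _) (max_le_max (hmono i j hij hj) le_rfl)
          (max_lt (hx j hj).2 hxbarb)
      linarith
    · have h1 : H xbar ≤ H (max (x 0) xbar) := by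
        apply hinc _ _ le_rfl (le_max_right _ _) (max_lt (hx 0 hn).2 hxbarb)
      linarith
  -- combine
  have Stotal : 0 ≤ ∑ i ∈ Finset.range n, w i * (H (x i) - H xbar) := by
    have hsum := add_nonneg SA SB
    rw [← Finset.sum_add_distrib] at hsum
    have e : ∀ i ∈ Finset.range n,
        w i * (H (min (x i) xbar) - H xbar) + w i * (H (max (x i) xbar) - H xbar)
          = w i * (H (x i) - H xbar) := by
      intro i _
      rcases le_total (x i) xbar with hc | hc
      · rw [min_eq_left hc, max_eq_right hc]; ring
      · rw [min_eq_right hc, max_eq_left hc]; ring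
    rwa [Finset.sum_congr rfl e] at hsum
  -- expand
  have expand : ∑ i ∈ Finset.range n, w i * (H (x i) - H xbar)
      = (∑ i ∈ Finset.range n, w i * f (x i))
        - (∑ i ∈ Finset.range n, w i * f |x i - xbar|)
        - f' xbar * (A * xbar) - A * (f xbar - f 0 - f' xbar * xbar) := by
    have e : ∀ i ∈ Finset.range n, w i * (H (x i) - H xbar)
        = w i * f (x i) - w i * f |x i - xbar| - f' xbar * (w i * x i)
          - w i * (f xbar - f 0 - f' xbar * xbar) := by
      intro i _
      rw [Hxbar]
      simp only [hH]
      ring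
    rw [Finset.sum_congr rfl e]
    rw [Finset.sum_sub_distrib, Finset.sum_sub_distrib, Finset.sum_sub_distrib,
        ← Finset.mul_sum, hsum_eq, ← Finset.sum_mul, ← hA]
  rw [expand] at Stotal
  have hAf0 : A * f 0 ≤ 0 := mul_nonpos_of_nonneg_of_nonpos hApos.le hf0
  have key : A * f xbar + (∑ i ∈ Finset.range n, w i * f |x i - xbar|)
      ≤ ∑ i ∈ Finset.range n, w i * f (x i) := by linarith
  have h1A : (0:ℝ) < 1/A := by positivity
  calc f xbar + (1 / A) * ∑ i ∈ Finset.range n, w i * f |x i - xbar|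
      = (1/A) * (A * f xbar + ∑ i ∈ Finset.range n, w i * f |x i - xbar|) := by
        field_simp
    _ ≤ (1/A) * ∑ i ∈ Finset.range n, w i * f (x i) :=
        mul_le_mul_of_nonneg_left key h1A.le
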